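/- Let K be a field. The ideal ⟨X³ + Y³, X²Y, XY²⟩ of K[X, Y] is an atom of the monoid of nonzero ideals of K[X, Y] under ideal multiplication: whenever it equals a product I·J of two ideals, then I or J is the unit ideal. -/

import Mathlib

open MvPolynomial

section Helpers

lemma sca_degree_add {σ : Type*} (u v : σ →₀ ℕ) :
    Finsupp.degree (u + v) = Finsupp.degree u + Finsupp.degree v := by
  simp [Finsupp.degree_eq_weight_one, map_add]

lemma sca_degree_single {σ : Type*} (i : σ) (n : ℕ) :
    Finsupp.degree (Finsupp.single i n) = n := by
  classical
  rcases eq_or_ne n 0 with rfl | hn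
  · simp [Finsupp.degree]
  · rw [Finsupp.degree_apply, Finsupp.support_single_ne_zero _ hn, Finset.sum_singleton,
      Finsupp.single_eq_same]

lemma sca_coeff_hc {σ K : Type*} [CommSemiring K] (n : ℕ) (f : MvPolynomial σ K) (d : σ →₀ ℕ) :
    coeff d (homogeneousComponent n f) = if d.degree = n then coeff d f else 0 :=
  coeff_homogeneousComponent ..

lemma sca_hc_mul {σ K : Type*} [CommSemiring K] (f g : MvPolynomial σ K) (n : ℕ) :
    homogeneousComponent n (f * g) =
      ∑ ij ∈ Finset.HasAntidiagonal.antidiagonal n, homogeneousComponent ij.1 f * homogeneousComponent ij.2 g := by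
  classical
  ext d
  rw [sca_coeff_hc, coeff_sum]
  simp only [coeff_mul, sca_coeff_hc]
  rw [Finset.sum_comm]
  simp only [ite_zero_mul_ite_zero]
  have key : ∀ uv : (σ →₀ ℕ) × (σ →₀ ℕ), uv ∈ Finset.HasAntidiagonal.antidiagonal d →
      (∑ ij ∈ Finset.HasAntidiagonal.antidiagonal n,
        if uv.1.degree = ij.1 ∧ uv.2.degree = ij.2 then coeff uv.1 f * coeff uv.2 g else 0)
      = if d.degree = n then coeff uv.1 f * coeff uv.2 g else 0 := by
    intro uv huv
    have hdeg : uv.1.degree + uv.2.degree = d.degree := by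
      rw [Finset.HasAntidiagonal.mem_antidiagonal] at huv
      rw [← huv, sca_degree_add]
    have h1 : ∀ ij ∈ Finset.HasAntidiagonal.antidiagonal n,
        (if uv.1.degree = ij.1 ∧ uv.2.degree = ij.2 then coeff uv.1 f * coeff uv.2 g else 0)
        = if ij = (uv.1.degree, uv.2.degree) then coeff uv.1 f * coeff uv.2 g else 0 := by
      intro ij _
      have : (uv.1.degree = ij.1 ∧ uv.2.degree = ij.2) ↔ ij = (uv.1.degree, uv.2.degree) := by
        constructor
        · rintro ⟨a, b⟩; exact Prod.ext a.symm b.symm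
        · rintro rfl; exact ⟨rfl, rfl⟩
      simp only [this]
    rw [Finset.sum_congr rfl h1, Finset.sum_ite_eq' (Finset.HasAntidiagonal.antidiagonal n)]
    simp only [Finset.HasAntidiagonal.mem_antidiagonal, hdeg]
  rw [Finset.sum_congr rfl key]
  split_ifs with hdn
  · rfl
  · simp

variable {K : Type*} [Field K]

lemma sca_hc0_mul (f g : MvPolynomial (Fin 2) K) :
    homogeneousComponent 0 (f * g) = homogeneousComponent 0 f * homogeneousComponent 0 g := by
  rw [sca_hc_mul, show (Finset.HasAntidiagonal.antidiagonal 0 : Finset (ℕ×ℕ)) = {(0,0)} from rfl,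
    Finset.sum_singleton]

lemma sca_hc1_mul (f g : MvPolynomial (Fin 2) K) :
    homogeneousComponent 1 (f * g) =
      homogeneousComponent 0 f * homogeneousComponent 1 g
      + homogeneousComponent 1 f * homogeneousComponent 0 g := by
  rw [sca_hc_mul, show (Finset.HasAntidiagonal.antidiagonal 1 : Finset (ℕ×ℕ)) = {(0,1),(1,0)} from rfl]
  simp [Finset.sum_insert]

lemma sca_hc2_mul (f g : MvPolynomial (Fin 2) K) :
    homogeneousComponent 2 (f * g) =
      homogeneousComponent 0 f * homogeneousComponent 2 g
      + homogeneousComponent 1 f * homogeneousComponent 1 g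
      + homogeneousComponent 2 f * homogeneousComponent 0 g := by
  rw [sca_hc_mul, show (Finset.HasAntidiagonal.antidiagonal 2 : Finset (ℕ×ℕ)) = {(0,2),(1,1),(2,0)} from rfl]
  rw [Finset.sum_insert (by decide), Finset.sum_insert (by decide), Finset.sum_singleton]
  ring

lemma sca_hc3_mul (f g : MvPolynomial (Fin 2) K) :
    homogeneousComponent 3 (f * g) =
      homogeneousComponent 0 f * homogeneousComponent 3 g
      + homogeneousComponent 1 f * homogeneousComponent 2 g
      + homogeneousComponent 2 f * homogeneousComponent 1 g
      + homogeneousComponent 3 f * homogeneousComponent 0 g := by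
  rw [sca_hc_mul, show (Finset.HasAntidiagonal.antidiagonal 3 : Finset (ℕ×ℕ)) = {(0,3),(1,2),(2,1),(3,0)} from rfl]
  rw [Finset.sum_insert (by decide), Finset.sum_insert (by decide),
    Finset.sum_insert (by decide), Finset.sum_singleton]
  ring

/-! generators -/

noncomputable def gg1 (K : Type*) [Field K] : MvPolynomial (Fin 2) K := X 0 ^ 3 + X 1 ^ 3
noncomputable def gg2 (K : Type*) [Field K] : MvPolynomial (Fin 2) K := X 0 ^ 2 * X 1
noncomputable def gg3 (K : Type*) [Field K] : MvPolynomial (Fin 2) K := X 0 * X 1 ^ 2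

noncomputable def aa (K : Type*) [Field K] : Ideal (MvPolynomial (Fin 2) K) :=
  Ideal.span {gg1 K, gg2 K, gg3 K}

noncomputable def WW (K : Type*) [Field K] : Submodule K (MvPolynomial (Fin 2) K) :=
  Submodule.span K {gg1 K, gg2 K, gg3 K}

lemma sca_hg1 : (gg1 K).IsHomogeneous 3 := by
  unfold gg1
  exact ((isHomogeneous_X K (0 : Fin 2)).pow 3).add ((isHomogeneous_X K (1 : Fin 2)).pow 3)
lemma sca_hg2 : (gg2 K).IsHomogeneous 3 := by
  unfold gg2
  exact ((isHomogeneous_X K (0 : Fin 2)).pow 2).mul (isHomogeneous_X K (1 : Fin 2))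
lemma sca_hg3 : (gg3 K).IsHomogeneous 3 := by
  unfold gg3
  simpa using (isHomogeneous_X K (0 : Fin 2)).mul ((isHomogeneous_X K (1 : Fin 2)).pow 2)

lemma sca_hc_g1 (n : ℕ) : homogeneousComponent n (gg1 K) = if n = 3 then gg1 K else 0 :=
  homogeneousComponent_of_mem (sca_hg1 (K := K))
lemma sca_hc_g2 (n : ℕ) : homogeneousComponent n (gg2 K) = if n = 3 then gg2 K else 0 :=
  homogeneousComponent_of_mem (sca_hg2 (K := K))
lemma sca_hc_g3 (n : ℕ) : homogeneousComponent n (gg3 K) = if n = 3 then gg3 K else 0 :=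
  homogeneousComponent_of_mem (sca_hg3 (K := K))

lemma ggm1 : gg1 K = monomial (Finsupp.single 0 3) 1 + monomial (Finsupp.single 1 3) 1 := by
  unfold gg1; rw [X_pow_eq_monomial, X_pow_eq_monomial]
lemma ggm2 : gg2 K = monomial (Finsupp.single 0 2 + Finsupp.single 1 1) 1 := by
  unfold gg2; rw [X_pow_eq_monomial, X, monomial_mul, one_mul]
lemma ggm3 : gg3 K = monomial (Finsupp.single 0 1 + Finsupp.single 1 2) 1 := by
  unfold gg3; rw [X_pow_eq_monomial, X, monomial_mul, one_mul]

lemma cg1X : coeff (Finsupp.single 0 3) (gg1 K) = 1 := by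
  simp [ggm1, coeff_monomial, Finsupp.ext_iff, Fin.forall_fin_two]
lemma cg1Y : coeff (Finsupp.single 1 3) (gg1 K) = 1 := by
  simp [ggm1, coeff_monomial, Finsupp.ext_iff, Fin.forall_fin_two]
lemma cg2X : coeff (Finsupp.single 0 3) (gg2 K) = 0 := by
  simp [ggm2, coeff_monomial, Finsupp.ext_iff, Fin.forall_fin_two]
lemma cg2Y : coeff (Finsupp.single 1 3) (gg2 K) = 0 := by
  simp [ggm2, coeff_monomial, Finsupp.ext_iff, Fin.forall_fin_two]
lemma cg3X : coeff (Finsupp.single 0 3) (gg3 K) = 0 := by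
  simp [ggm3, coeff_monomial, Finsupp.ext_iff, Fin.forall_fin_two]
lemma cg3Y : coeff (Finsupp.single 1 3) (gg3 K) = 0 := by
  simp [ggm3, coeff_monomial, Finsupp.ext_iff, Fin.forall_fin_two]

lemma gg2_ne : (gg2 K) ≠ 0 := by
  intro hc
  have := congrArg (coeff (Finsupp.single 0 2 + Finsupp.single 1 1)) hc
  simp [ggm2, coeff_monomial] at this

lemma gg1_ne : (gg1 K) ≠ 0 := by
  intro hc
  have := congrArg (coeff (Finsupp.single 0 3)) hc
  rw [cg1X] at this
  simp at this

/-! membership in `aa`: vanishing of low components -/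

lemma mem_aa {f : MvPolynomial (Fin 2) K} (hf : f ∈ aa K) :
    homogeneousComponent 0 f = 0 ∧ homogeneousComponent 1 f = 0 ∧
    homogeneousComponent 2 f = 0 ∧ homogeneousComponent 3 f ∈ WW K := by
  refine Submodule.span_induction ?_ ?_ ?_ ?_ hf
  · rintro x (rfl | rfl | rfl)
    · exact ⟨by rw [sca_hc_g1]; norm_num, by rw [sca_hc_g1]; norm_num, by rw [sca_hc_g1]; norm_num,
        by rw [sca_hc_g1]; simpa [WW] using Submodule.subset_span (by simp)⟩
    · exact ⟨by rw [sca_hc_g2]; norm_num, by rw [sca_hc_g2]; norm_num, by rw [sca_hc_g2]; norm_num,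
        by rw [sca_hc_g2]; simpa [WW] using Submodule.subset_span (by simp)⟩
    · exact ⟨by rw [sca_hc_g3]; norm_num, by rw [sca_hc_g3]; norm_num, by rw [sca_hc_g3]; norm_num,
        by rw [sca_hc_g3]; simpa [WW] using Submodule.subset_span (by simp)⟩
  · exact ⟨by simp, by simp, by simp, by simp⟩
  · rintro x y - - ⟨hx0, hx1, hx2, hx3⟩ ⟨hy0, hy1, hy2, hy3⟩
    exact ⟨by rw [map_add, hx0, hy0, add_zero], by rw [map_add, hx1, hy1, add_zero],
      by rw [map_add, hx2, hy2, add_zero],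
      by rw [map_add]; exact (WW K).add_mem hx3 hy3⟩
  · rintro r x - ⟨hx0, hx1, hx2, hx3⟩
    refine ⟨?_, ?_, ?_, ?_⟩
    · rw [smul_eq_mul, sca_hc0_mul, hx0, mul_zero]
    · rw [smul_eq_mul, sca_hc1_mul, hx0, hx1]; ring
    · rw [smul_eq_mul, sca_hc2_mul, hx0, hx1, hx2]; ring
    · rw [smul_eq_mul, sca_hc3_mul, hx0, hx1, hx2, homogeneousComponent_zero]
      have : C (coeff 0 r) * homogeneousComponent 3 x
          = (coeff 0 r) • homogeneousComponent 3 x := by rw [smul_eq_C_mul]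
      simpa [this] using (WW K).smul_mem _ hx3

/-! properness forces vanishing constant term -/

lemma sca_decomp (f : MvPolynomial (Fin 2) K) :
    ∃ a b, f = C (constantCoeff f) + X 0 * a + X 1 * b := by
  induction f using MvPolynomial.induction_on with
  | C c => exact ⟨0, 0, by simp⟩
  | add p q hp hq =>
    obtain ⟨a, b, hp⟩ := hp
    obtain ⟨c, d, hq⟩ := hq
    exact ⟨a + c, b + d, by rw [map_add, map_add]; nth_rewrite 1 [hp, hq]; ring⟩
  | mul_X p i hp =>
    obtain ⟨a, b, hp⟩ := hp
    fin_cases i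
    · exact ⟨p, 0, by simp [mul_comm]⟩
    · exact ⟨0, p, by simp [mul_comm]⟩

lemma sca_m4 (p q : MvPolynomial (Fin 2) K) : (X 0 * p + X 1 * q) ^ 4 ∈ aa K := by
  have key : (X 0 * p + X 1 * q) ^ 4 =
      (X 0 * p^4 + X 1 * q^4) * gg1 K
      + (X 0 * (4*p^3*q - q^4) + 6 * X 1 * p^2*q^2) * gg2 K
      + (X 1 * (4*p*q^3 - p^4)) * gg3 K := by
    unfold gg1 gg2 gg3; ring
  rw [key]
  refine Ideal.add_mem _ (Ideal.add_mem _ ?_ ?_) ?_ <;>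
    exact Ideal.mul_mem_left _ _ (Ideal.subset_span (by simp))

lemma sca_const0 {I : Ideal (MvPolynomial (Fin 2) K)} (hI : I ≠ ⊤) (haI : aa K ≤ I)
    {f : MvPolynomial (Fin 2) K} (hf : f ∈ I) : constantCoeff f = 0 := by
  by_contra hc
  apply hI
  obtain ⟨a, b, hab⟩ := sca_decomp f
  set u : MvPolynomial (Fin 2) K := X 0 * a + X 1 * b with hu
  have hCu : C (constantCoeff f) = f - u := by nth_rewrite 2 [hab]; ring
  have h4 : C (constantCoeff f) ^ 4 = u^4 + f * (f^3 - 4*f^2*u + 6*f*u^2 - 4*u^3) := by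
    rw [hCu]; ring
  have hmem : C (constantCoeff f) ^ 4 ∈ I := by
    rw [h4]
    exact Ideal.add_mem _ (haI (sca_m4 a b)) (Ideal.mul_mem_right _ _ hf)
  rw [Ideal.eq_top_iff_one]
  have : (C ((constantCoeff f)^4)⁻¹ : MvPolynomial (Fin 2) K) * C (constantCoeff f) ^ 4 = 1 := by
    rw [← C_pow, ← C_mul, inv_mul_cancel₀ (pow_ne_zero 4 hc), C_1]
  rw [← this]
  exact Ideal.mul_mem_left _ _ hmem

lemma sca_hc0_eq_zero {f : MvPolynomial (Fin 2) K} (h : constantCoeff f = 0) :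
    homogeneousComponent 0 f = 0 := by
  rw [homogeneousComponent_zero]
  simpa using (show coeff 0 f = 0 from h)

/-! classification of low-degree homogeneous polynomials in two variables -/

lemma fin2_eq (d : Fin 2 →₀ ℕ) : d = Finsupp.single 0 (d 0) + Finsupp.single 1 (d 1) := by
  ext i
  fin_cases i <;> simp [Finsupp.single_apply]

lemma deg_fin2 (d : Fin 2 →₀ ℕ) : d.degree = d 0 + d 1 := by
  conv_lhs => rw [fin2_eq d]
  rw [sca_degree_add, sca_degree_single, sca_degree_single]

lemma lin_classify {p : MvPolynomial (Fin 2) K} (hp : p.IsHomogeneous 1) :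
    p = C (coeff (Finsupp.single 0 1) p) * X 0 + C (coeff (Finsupp.single 1 1) p) * X 1 := by
  classical
  ext d
  rw [coeff_add, coeff_C_mul, coeff_C_mul, coeff_X', coeff_X']
  by_cases h0 : d.degree = 1
  · rw [deg_fin2] at h0
    have hcase : (d 0 = 1 ∧ d 1 = 0) ∨ (d 0 = 0 ∧ d 1 = 1) := by omega
    rcases hcase with ⟨h1, h2⟩ | ⟨h1, h2⟩
    · have hd0 : d = Finsupp.single 0 1 := by rw [fin2_eq d, h1, h2]; simp
      rw [if_pos hd0.symm, if_neg, hd0]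
      · ring
      · rw [hd0]; intro hcon; have := DFunLike.congr_fun hcon 1; simp at this
    · have hd0 : d = Finsupp.single 1 1 := by rw [fin2_eq d, h1, h2]; simp
      rw [if_pos hd0.symm, if_neg, hd0]
      · ring
      · rw [hd0]; intro hcon; have := DFunLike.congr_fun hcon 0; simp at this
  · rw [hp.coeff_eq_zero h0, if_neg, if_neg]
    · simp
    · rintro rfl; exact h0 (sca_degree_single _ _)
    · rintro rfl; exact h0 (sca_degree_single _ _)

lemma X0X1_eq : (X 0 * X 1 : MvPolynomial (Fin 2) K)
    = monomial (Finsupp.single 0 1 + Finsupp.single 1 1) 1 := by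
  rw [X, X, monomial_mul, one_mul]

lemma quad_classify {q : MvPolynomial (Fin 2) K} (hq : q.IsHomogeneous 2)
    (h02 : coeff (Finsupp.single 0 2) q = 0) (h12 : coeff (Finsupp.single 1 2) q = 0) :
    q = C (coeff (Finsupp.single 0 1 + Finsupp.single 1 1) q) * (X 0 * X 1) := by
  classical
  ext d
  rw [coeff_C_mul, X0X1_eq, coeff_monomial]
  by_cases h0 : d.degree = 2
  · rw [deg_fin2] at h0
    have hcase : (d 0 = 2 ∧ d 1 = 0) ∨ (d 0 = 1 ∧ d 1 = 1) ∨ (d 0 = 0 ∧ d 1 = 2) := by omega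
    rcases hcase with ⟨h1, h2⟩ | ⟨h1, h2⟩ | ⟨h1, h2⟩
    · have hd0 : d = Finsupp.single 0 2 := by rw [fin2_eq d, h1, h2]; simp
      rw [hd0, h02, if_neg]
      · ring
      · intro hcon; have := DFunLike.congr_fun hcon 1; simp [Finsupp.single_apply] at this
    · have hd0 : d = Finsupp.single 0 1 + Finsupp.single 1 1 := by rw [fin2_eq d, h1, h2]
      rw [hd0, if_pos rfl]; ring
    · have hd0 : d = Finsupp.single 1 2 := by rw [fin2_eq d, h1, h2]; simp
      rw [hd0, h12, if_neg]
      · ring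
      · intro hcon; have := DFunLike.congr_fun hcon 0; simp [Finsupp.single_apply] at this
  · rw [hq.coeff_eq_zero h0, if_neg]
    · ring
    · rintro rfl
      exact h0 (by rw [sca_degree_add, sca_degree_single, sca_degree_single])

/-! coefficient facts about W -/

lemma Wfun {w : MvPolynomial (Fin 2) K} (hw : w ∈ WW K) :
    coeff (Finsupp.single 0 3) w = coeff (Finsupp.single 1 3) w := by
  refine Submodule.span_induction ?_ ?_ ?_ ?_ hw
  · rintro x (rfl | rfl | rfl)
    · rw [cg1X, cg1Y]
    · rw [cg2X, cg2Y]
    · rw [cg3X, cg3Y]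
  · simp
  · intro x y _ _ hx hy; rw [coeff_add, coeff_add, hx, hy]
  · intro r x _ hx; rw [coeff_smul, coeff_smul, hx]

end Helpers
section Main

variable {K : Type*} [Field K]

lemma coeff_X0_mul_a (q : MvPolynomial (Fin 2) K) :
    coeff (Finsupp.single 0 3) (X 0 * q) = coeff (Finsupp.single 0 2) q := by
  have h : (Finsupp.single 0 3 : Fin 2 →₀ ℕ) = Finsupp.single 0 1 + Finsupp.single 0 2 := by
    rw [← Finsupp.single_add]
  rw [h, coeff_X_mul]

lemma coeff_X0_mul_b (q : MvPolynomial (Fin 2) K) :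
    coeff (Finsupp.single 1 3) (X 0 * q) = 0 := by
  classical
  rw [coeff_X_mul']
  rw [if_neg]
  simp [Finsupp.mem_support_iff, Finsupp.single_apply]

lemma coeff_X1_mul_a (q : MvPolynomial (Fin 2) K) :
    coeff (Finsupp.single 1 3) (X 1 * q) = coeff (Finsupp.single 1 2) q := by
  have h : (Finsupp.single 1 3 : Fin 2 →₀ ℕ) = Finsupp.single 1 1 + Finsupp.single 1 2 := by
    rw [← Finsupp.single_add]
  rw [h, coeff_X_mul]

lemma coeff_X1_mul_b (q : MvPolynomial (Fin 2) K) :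
    coeff (Finsupp.single 0 3) (X 1 * q) = 0 := by
  classical
  rw [coeff_X_mul']
  rw [if_neg]
  simp [Finsupp.mem_support_iff, Finsupp.single_apply]

/-- the span of the products of first components of `I` with second components of `J` -/
noncomputable def TT (I J : Ideal (MvPolynomial (Fin 2) K)) : Submodule K (MvPolynomial (Fin 2) K) :=
  Submodule.span K {p | ∃ f ∈ I, ∃ g ∈ J,
    homogeneousComponent 1 f * homogeneousComponent 2 g = p}

lemma hc3_mem_TT {I J : Ideal (MvPolynomial (Fin 2) K)}
    (hI0 : ∀ f ∈ I, homogeneousComponent 0 f = 0)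
    (hJ0 : ∀ g ∈ J, homogeneousComponent 0 g = 0)
    (hJ1 : ∀ g ∈ J, homogeneousComponent 1 g = 0) :
    ∀ h ∈ I * J, homogeneousComponent 3 h ∈ TT I J := by
  intro h hh
  refine Submodule.mul_induction_on hh ?_ ?_
  · intro f hf g hg
    rw [sca_hc3_mul, hI0 f hf, hJ0 g hg, hJ1 g hg]
    simp only [zero_mul, mul_zero, add_zero, zero_add]
    exact Submodule.subset_span ⟨f, hf, g, hg, rfl⟩
  · intro x y hx hy
    rw [map_add]
    exact (TT I J).add_mem hx hy

lemma hc3_zero_22 {I J : Ideal (MvPolynomial (Fin 2) K)}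
    (hI0 : ∀ f ∈ I, homogeneousComponent 0 f = 0)
    (hI1 : ∀ f ∈ I, homogeneousComponent 1 f = 0)
    (hJ0 : ∀ g ∈ J, homogeneousComponent 0 g = 0)
    (hJ1 : ∀ g ∈ J, homogeneousComponent 1 g = 0) :
    ∀ h ∈ I * J, homogeneousComponent 3 h = 0 := by
  intro h hh
  refine Submodule.mul_induction_on hh ?_ ?_
  · intro f hf g hg
    rw [sca_hc3_mul, hI0 f hf, hI1 f hf, hJ0 g hg, hJ1 g hg]
    ring
  · intro x y hx hy
    rw [map_add, hx, hy, add_zero]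

lemma hc3_zero_13 {I J : Ideal (MvPolynomial (Fin 2) K)}
    (hI0 : ∀ f ∈ I, homogeneousComponent 0 f = 0)
    (hJ0 : ∀ g ∈ J, homogeneousComponent 0 g = 0)
    (hJ1 : ∀ g ∈ J, homogeneousComponent 1 g = 0)
    (hJ2 : ∀ g ∈ J, homogeneousComponent 2 g = 0) :
    ∀ h ∈ I * J, homogeneousComponent 3 h = 0 := by
  intro h hh
  refine Submodule.mul_induction_on hh ?_ ?_
  · intro f hf g hg
    rw [sca_hc3_mul, hI0 f hf, hJ0 g hg, hJ1 g hg, hJ2 g hg]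
    ring
  · intro x y hx hy
    rw [map_add, hx, hy, add_zero]

/-- Core asymmetric lemma: `aa = I*J`, both proper, and `I` contains an element with
nonvanishing linear component — contradiction. -/
lemma sca_main {I J : Ideal (MvPolynomial (Fin 2) K)}
    (h' : aa K = I * J)
    (hI0 : ∀ f ∈ I, homogeneousComponent 0 f = 0)
    (hJ0 : ∀ g ∈ J, homogeneousComponent 0 g = 0)
    (f₀ : MvPolynomial (Fin 2) K) (hf₀ : f₀ ∈ I)
    (hf₀ne : homogeneousComponent 1 f₀ ≠ 0) : False := by
  classical
  have g1mem : gg1 K ∈ I * J := h' ▸ Ideal.subset_span (by simp)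
  have g2mem : gg2 K ∈ I * J := h' ▸ Ideal.subset_span (by simp)
  have g3mem : gg3 K ∈ I * J := h' ▸ Ideal.subset_span (by simp)
  -- Step B : all elements of J have vanishing linear component
  have hJ1 : ∀ g ∈ J, homogeneousComponent 1 g = 0 := by
    intro g hg
    by_contra hne
    have hmem : f₀ * g ∈ aa K := h' ▸ Ideal.mul_mem_mul hf₀ hg
    obtain ⟨-, -, h2, -⟩ := mem_aa hmem
    rw [sca_hc2_mul, hI0 f₀ hf₀, hJ0 g hg, zero_mul, mul_zero, add_zero, zero_add] at h2
    exact (mul_ne_zero hf₀ne hne) h2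
  -- products of components lie in W
  have hprod : ∀ f ∈ I, ∀ g ∈ J,
      homogeneousComponent 1 f * homogeneousComponent 2 g ∈ WW K := by
    intro f hf g hg
    have hmem : f * g ∈ aa K := h' ▸ Ideal.mul_mem_mul hf hg
    obtain ⟨-, -, -, h3⟩ := mem_aa hmem
    rw [sca_hc3_mul, hI0 f hf, hJ0 g hg, hJ1 g hg, zero_mul, mul_zero, mul_zero,
      add_zero, add_zero, zero_add] at h3
    exact h3
  -- the generators lie in TT
  have tg1 : gg1 K ∈ TT I J := by
    have := hc3_mem_TT hI0 hJ0 hJ1 _ g1mem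
    rwa [sca_hc_g1, if_pos rfl] at this
  have tg2 : gg2 K ∈ TT I J := by
    have := hc3_mem_TT hI0 hJ0 hJ1 _ g2mem
    rwa [sca_hc_g2, if_pos rfl] at this
  have tg3 : gg3 K ∈ TT I J := by
    have := hc3_mem_TT hI0 hJ0 hJ1 _ g3mem
    rwa [sca_hc_g3, if_pos rfl] at this
  set ℓ₀ : MvPolynomial (Fin 2) K := homogeneousComponent 1 f₀ with hℓ₀
  obtain ⟨a, b, hl0⟩ : ∃ a b, ℓ₀ = C a * X 0 + C b * X 1 :=
    ⟨_, _, lin_classify (homogeneousComponent_isHomogeneous 1 f₀)⟩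
  have hab : ¬(a = 0 ∧ b = 0) := by
    rintro ⟨rfl, rfl⟩
    apply hf₀ne
    show ℓ₀ = 0
    rw [hl0]
    simp
  by_cases hprop : ∀ f ∈ I, ∃ c : K, homogeneousComponent 1 f = c • ℓ₀
  · -- all linear components proportional to ℓ₀ : everything in TT is a multiple of ℓ₀
    have hrange : TT I J ≤ LinearMap.range (LinearMap.mulLeft K ℓ₀) := by
      rw [TT, Submodule.span_le]
      rintro p ⟨f, hf, g, hg, rfl⟩
      obtain ⟨c, hc⟩ := hprop f hf
      exact ⟨c • homogeneousComponent 2 g, by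
        rw [LinearMap.mulLeft_apply, hc, smul_mul_assoc, mul_smul_comm]⟩
    obtain ⟨u1, hu1⟩ := hrange tg1
    obtain ⟨u2, hu2⟩ := hrange tg2
    obtain ⟨u3, hu3⟩ := hrange tg3
    rw [LinearMap.mulLeft_apply] at hu1 hu2 hu3
    set φ : MvPolynomial (Fin 2) K →+* K := (eval ![b, -a]) with hφ
    have hevℓ : φ ℓ₀ = 0 := by
      rw [hl0]
      simp [hφ]
      ring
    have e1 : b^3 + (-a)^3 = 0 := by
      have := congrArg φ hu1
      rw [map_mul, hevℓ, zero_mul] at this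
      rw [show (b^3 + (-a)^3 : K) = φ (gg1 K) by unfold gg1; simp [hφ], ← this]
    have e2 : b^2 * (-a) = 0 := by
      have := congrArg φ hu2
      rw [map_mul, hevℓ, zero_mul] at this
      rw [show (b^2 * (-a) : K) = φ (gg2 K) by unfold gg2; simp [hφ], ← this]
    have e3 : b * (-a)^2 = 0 := by
      have := congrArg φ hu3
      rw [map_mul, hevℓ, zero_mul] at this
      rw [show (b * (-a)^2 : K) = φ (gg3 K) by unfold gg3; simp [hφ], ← this]
    apply hab
    rcases mul_eq_zero.mp e2 with h | h
    · have hb : b = 0 := by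
        have := pow_eq_zero_iff (n := 2) (by norm_num) |>.mp h
        exact this
      constructor
      · have : (-a)^3 = 0 := by rw [← e1, hb]; ring
        have := pow_eq_zero_iff (n := 3) (by norm_num) |>.mp this
        simpa using this
      · exact hb
    · have ha : a = 0 := by simpa using h
      constructor
      · exact ha
      · have : b^3 = 0 := by rw [← e1, ha]; ring
        have := pow_eq_zero_iff (n := 3) (by norm_num) |>.mp this
        exact this
  · -- two independent linear components
    push_neg at hprop
    obtain ⟨f₁, hf₁, hnc⟩ := hprop
    set ℓ₁ : MvPolynomial (Fin 2) K := homogeneousComponent 1 f₁ with hℓ₁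
    obtain ⟨c, d, hl1⟩ : ∃ c d, ℓ₁ = C c * X 0 + C d * X 1 :=
      ⟨_, _, lin_classify (homogeneousComponent_isHomogeneous 1 f₁)⟩
    set Δ : K := a * d - b * c with hΔdef
    have hΔ : Δ ≠ 0 := by
      intro hz
      rcases eq_or_ne a 0 with ha | ha
      · have hb : b ≠ 0 := fun hb => hab ⟨ha, hb⟩
        have hc : c = 0 := by
          have : b * c = 0 := by linear_combination -hz + d * ha
          rcases mul_eq_zero.mp this with h | h
          · exact absurd h hb
          · exact h
        apply hnc (d / b)
        rw [hl1, hl0, smul_eq_C_mul, ha, hc]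
        rw [mul_add, ← mul_assoc, ← mul_assoc, ← C_mul, ← C_mul]
        rw [mul_zero, div_mul_cancel₀ _ hb]
      · apply hnc (c / a)
        have hd : d = c / a * b := by
          field_simp
          linear_combination hz
        rw [hl1, hl0, smul_eq_C_mul, hd]
        rw [mul_add, ← mul_assoc, ← mul_assoc, ← C_mul, ← C_mul]
        rw [div_mul_cancel₀ _ ha]
    -- X 0 and X 1 in terms of ℓ₀, ℓ₁
    have hX0 : (X 0 : MvPolynomial (Fin 2) K) = C (Δ⁻¹*d) * ℓ₀ - C (Δ⁻¹*b) * ℓ₁ := by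
      have h1 : Δ⁻¹ * Δ = 1 := inv_mul_cancel₀ hΔ
      calc (X 0 : MvPolynomial (Fin 2) K)
          = C (Δ⁻¹ * Δ) * X 0 + C (Δ⁻¹ * (d*b - b*d)) * X 1 := by
            rw [h1, show (d*b - b*d : K) = 0 by ring]; simp
        _ = C (Δ⁻¹*d) * ℓ₀ - C (Δ⁻¹*b) * ℓ₁ := by
            rw [hl0, hl1, hΔdef]
            simp only [C_mul, C_sub]
            ring
    have hX1 : (X 1 : MvPolynomial (Fin 2) K) = C (Δ⁻¹*a) * ℓ₁ - C (Δ⁻¹*c) * ℓ₀ := by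
      have h1 : Δ⁻¹ * Δ = 1 := inv_mul_cancel₀ hΔ
      calc (X 1 : MvPolynomial (Fin 2) K)
          = C (Δ⁻¹ * (a*c - c*a)) * X 0 + C (Δ⁻¹ * Δ) * X 1 := by
            rw [h1, show (a*c - c*a : K) = 0 by ring]; simp
        _ = C (Δ⁻¹*a) * ℓ₁ - C (Δ⁻¹*c) * ℓ₀ := by
            rw [hl0, hl1, hΔdef]
            simp only [C_mul, C_sub]
            ring
    -- corner coefficients of quadratic components of J vanish
    have hq : ∀ g ∈ J, coeff (Finsupp.single 0 2) (homogeneousComponent 2 g) = 0 ∧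
        coeff (Finsupp.single 1 2) (homogeneousComponent 2 g) = 0 := by
      intro g hg
      set q := homogeneousComponent 2 g with hqd
      have hXq : X 0 * q ∈ WW K := by
        rw [hX0, sub_mul, mul_assoc, mul_assoc]
        exact (WW K).sub_mem
          (by rw [← smul_eq_C_mul]; exact (WW K).smul_mem _ (hprod f₀ hf₀ g hg))
          (by rw [← smul_eq_C_mul]; exact (WW K).smul_mem _ (hprod f₁ hf₁ g hg))
      have hYq : X 1 * q ∈ WW K := by
        rw [hX1, sub_mul, mul_assoc, mul_assoc]
        exact (WW K).sub_mem
          (by rw [← smul_eq_C_mul]; exact (WW K).smul_mem _ (hprod f₁ hf₁ g hg))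
          (by rw [← smul_eq_C_mul]; exact (WW K).smul_mem _ (hprod f₀ hf₀ g hg))
      constructor
      · have := Wfun hXq
        rw [coeff_X0_mul_a, coeff_X0_mul_b] at this
        exact this
      · have := Wfun hYq
        rw [coeff_X1_mul_a, coeff_X1_mul_b] at this
        exact this.symm
    -- every element of TT has vanishing X³-coefficient
    have hTc : ∀ t ∈ TT I J, coeff (Finsupp.single 0 3) t = 0 := by
      intro t ht
      refine Submodule.span_induction ?_ ?_ ?_ ?_ ht
      · rintro p ⟨f, hf, g, hg, rfl⟩
        obtain ⟨h02, h12⟩ := hq g hg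
        obtain ⟨a', b', hlf⟩ : ∃ a' b',
            homogeneousComponent 1 f = C a' * X 0 + C b' * X 1 :=
          ⟨_, _, lin_classify (homogeneousComponent_isHomogeneous 1 f)⟩
        have hqf := quad_classify (homogeneousComponent_isHomogeneous 2 g) h02 h12
        set m := coeff (Finsupp.single 0 1 + Finsupp.single 1 1) (homogeneousComponent 2 g)
        have key : homogeneousComponent 1 f * homogeneousComponent 2 g
            = C (a' * m) * gg2 K + C (b' * m) * gg3 K := by
          rw [hlf, hqf]
          unfold gg2 gg3
          simp only [C_mul]
          ring
        rw [key, coeff_add, coeff_C_mul, coeff_C_mul, cg2X, cg3X]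
        ring
      · simp
      · intro x y _ _ hx hy; rw [coeff_add, hx, hy, add_zero]
      · intro r x _ hx; rw [coeff_smul, hx, smul_zero]
    have := hTc _ tg1
    rw [cg1X] at this
    exact one_ne_zero this

end Main

/-- The ideal `⟨X³ + Y³, X²Y, XY²⟩` of `K[X, Y]` is an atom of the monoid of nonzero
ideals under ideal multiplication: whenever it equals a product `I·J`, then `I` or `J`
is the unit ideal. -/
theorem span_cubic_atom {K : Type*} [Field K]
    (I J : Ideal (MvPolynomial (Fin 2) K))
    (h : Ideal.span {(X 0 : MvPolynomial (Fin 2) K) ^ 3 + (X 1 : MvPolynomial (Fin 2) K) ^ 3,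
        (X 0 : MvPolynomial (Fin 2) K) ^ 2 * X 1,
        (X 0 : MvPolynomial (Fin 2) K) * (X 1 : MvPolynomial (Fin 2) K) ^ 2} = I * J) :
    I = ⊤ ∨ J = ⊤ := by
  by_contra hcon
  push_neg at hcon
  obtain ⟨hItop, hJtop⟩ := hcon
  have h' : aa K = I * J := by
    unfold aa gg1 gg2 gg3
    exact h
  have haI : aa K ≤ I := h' ▸ Ideal.mul_le_left
  have haJ : aa K ≤ J := h' ▸ Ideal.mul_le_right
  have hI0 : ∀ f ∈ I, homogeneousComponent 0 f = 0 :=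
    fun f hf => sca_hc0_eq_zero (sca_const0 hItop haI hf)
  have hJ0 : ∀ g ∈ J, homogeneousComponent 0 g = 0 :=
    fun g hg => sca_hc0_eq_zero (sca_const0 hJtop haJ hg)
  have g2mem : gg2 K ∈ I * J := h' ▸ Ideal.subset_span (by simp)
  have hA : (∃ f ∈ I, homogeneousComponent 1 f ≠ 0) ∨
      (∃ g ∈ J, homogeneousComponent 1 g ≠ 0) := by
    by_contra hc
    push_neg at hc
    obtain ⟨h1, h2⟩ := hc
    have := hc3_zero_22 hI0 h1 hJ0 h2 _ g2mem
    rw [sca_hc_g2, if_pos rfl] at this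
    exact gg2_ne this
  rcases hA with ⟨f₀, hf₀, hf₀ne⟩ | ⟨g₀, hg₀, hg₀ne⟩
  · exact absurd (sca_main h' hI0 hJ0 f₀ hf₀ hf₀ne) id
  · have h'' : aa K = J * I := by rw [h', mul_comm]
    exact absurd (sca_main h'' hJ0 hI0 g₀ hg₀ hg₀ne) id
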